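/- There exists r₀ > 0 such that for all r with 0 ≤ r ≤ r₀ and all β ≥ 0, the function F(β) = ∫₀^β (r² + 2 sin² y)^{1/2} (3/4 − sin² y) dy is nonnegative; moreover if r > 0 then F(β) = 0 if and only if β = 0. -/

import Mathlib

open Real intervalIntegral Set MeasureTheory

namespace SkyrmeAux

noncomputable def g (r y : ℝ) : ℝ :=
  Real.sqrt (r ^ 2 + 2 * Real.sin y ^ 2) * (3/4 - Real.sin y ^ 2)

lemma cont (r : ℝ) : Continuous (g r) := by
  unfold g; fun_prop

lemma intg (r a b : ℝ) : IntervalIntegrable (g r) volume a b :=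
  (cont r).intervalIntegrable a b

lemma per (r : ℝ) : Function.Periodic (g r) π := by
  intro y; unfold g; rw [Real.sin_add_pi]; ring_nf

lemma g_pi_sub (r y : ℝ) : g r (π - y) = g r y := by
  unfold g; rw [Real.sin_pi_sub]

lemma sin_sq_le₁ {y : ℝ} (hy : y ∈ Icc 0 (π/3)) : Real.sin y ^ 2 ≤ 3/4 := by
  have h1 : Real.sin y ≤ Real.sin (π/3) :=
    Real.sin_le_sin_of_le_of_le_pi_div_two (by linarith [hy.1, Real.pi_pos])
      (by linarith [Real.pi_pos]) hy.2
  rw [Real.sin_pi_div_three] at h1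
  have h0 : 0 ≤ Real.sin y := Real.sin_nonneg_of_nonneg_of_le_pi hy.1
    (by linarith [hy.2, Real.pi_pos])
  have h3 : Real.sqrt 3 ^ 2 = 3 := Real.sq_sqrt (by norm_num)
  nlinarith [Real.sqrt_nonneg 3]

lemma sin_sq_le₃ {y : ℝ} (hy : y ∈ Icc (2*π/3) π) : Real.sin y ^ 2 ≤ 3/4 := by
  rw [← Real.sin_pi_sub]
  exact sin_sq_le₁ ⟨by linarith [hy.2], by linarith [hy.1]⟩

lemma sin_sq_ge₂ {y : ℝ} (hy : y ∈ Icc (π/3) (2*π/3)) : 3/4 ≤ Real.sin y ^ 2 := by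
  have key : ∀ z : ℝ, z ∈ Icc (π/3) (π/2) → 3/4 ≤ Real.sin z ^ 2 := by
    intro z hz
    have h1 : Real.sin (π/3) ≤ Real.sin z :=
      Real.sin_le_sin_of_le_of_le_pi_div_two (by linarith [Real.pi_pos, hz.1]) hz.2 hz.1
    rw [Real.sin_pi_div_three] at h1
    have h3 : Real.sqrt 3 ^ 2 = 3 := Real.sq_sqrt (by norm_num)
    nlinarith [Real.sqrt_nonneg 3]
  rcases le_or_gt y (π/2) with h | h
  · exact key y ⟨hy.1, h⟩
  · rw [← Real.sin_pi_sub]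
    exact key (π - y) ⟨by linarith [hy.2], by linarith⟩

lemma g_nonneg₁ {r y : ℝ} (hy : y ∈ Icc 0 (π/3)) : 0 ≤ g r y :=
  mul_nonneg (Real.sqrt_nonneg _) (by linarith [sin_sq_le₁ hy])

lemma g_nonneg₃ {r y : ℝ} (hy : y ∈ Icc (2*π/3) π) : 0 ≤ g r y :=
  mul_nonneg (Real.sqrt_nonneg _) (by linarith [sin_sq_le₃ hy])

lemma g_nonpos₂ {r y : ℝ} (hy : y ∈ Icc (π/3) (2*π/3)) : g r y ≤ 0 :=
  mul_nonpos_of_nonneg_of_nonpos (Real.sqrt_nonneg _) (by linarith [sin_sq_ge₂ hy])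

lemma g_pos₁ {r y : ℝ} (hy : y ∈ Ioo 0 (π/3)) : 0 < g r y := by
  have hs : 0 < Real.sin y := Real.sin_pos_of_pos_of_lt_pi hy.1
    (by linarith [hy.2, Real.pi_pos])
  have h2 : Real.sin y ^ 2 ≤ 3/4 := sin_sq_le₁ ⟨hy.1.le, hy.2.le⟩
  -- strict: sin y < sin (π/3)
  have h1 : Real.sin y < Real.sin (π/3) :=
    Real.strictMonoOn_sin ⟨by linarith [hy.1, Real.pi_pos], by linarith [hy.2, Real.pi_pos]⟩
      ⟨by linarith [Real.pi_pos], by linarith [Real.pi_pos]⟩ hy.2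
  rw [Real.sin_pi_div_three] at h1
  have h3 : Real.sqrt 3 ^ 2 = 3 := Real.sq_sqrt (by norm_num)
  have hlt : Real.sin y ^ 2 < 3/4 := by nlinarith [Real.sqrt_nonneg 3]
  apply mul_pos _ (by linarith)
  apply Real.sqrt_pos.mpr
  nlinarith [sq_nonneg r]

lemma g_pos₃ {r y : ℝ} (hy : y ∈ Ioo (2*π/3) π) : 0 < g r y := by
  rw [← g_pi_sub]
  exact g_pos₁ ⟨by linarith [hy.2], by linarith [hy.1]⟩



noncomputable def c (r : ℝ) : ℝ := Real.sqrt (r ^ 2 + 3/2) - Real.sqrt (3/2)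

lemma c_nonneg (r : ℝ) : 0 ≤ c r :=
  sub_nonneg.mpr (Real.sqrt_le_sqrt (by nlinarith [sq_nonneg r]))

lemma c_pos {r : ℝ} (hr : 0 < r) : 0 < c r :=
  sub_pos.mpr (Real.sqrt_lt_sqrt (by norm_num) (by nlinarith))

lemma pw {r y : ℝ} (hy : y ∈ Icc 0 π) :
    Real.sqrt 2 * Real.sin y * (3/4 - Real.sin y ^ 2)
      + c r * (3/4 - Real.sin y ^ 2)
    ≤ Real.sqrt (r ^ 2 + 2 * Real.sin y ^ 2) * (3/4 - Real.sin y ^ 2) := by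
  set s := Real.sin y with hs
  have hs0 : 0 ≤ s := Real.sin_nonneg_of_nonneg_of_le_pi hy.1 hy.2
  set a := Real.sqrt (r ^ 2 + 2 * s ^ 2) with ha'
  set b := Real.sqrt (r ^ 2 + 3/2) with hb'
  set d := Real.sqrt (3/2) with hd'
  set e := Real.sqrt 2 with he'
  have ha2 : a ^ 2 = r ^ 2 + 2 * s ^ 2 := Real.sq_sqrt (by positivity)
  have hb2 : b ^ 2 = r ^ 2 + 3/2 := Real.sq_sqrt (by positivity)
  have hd2 : d ^ 2 = 3/2 := Real.sq_sqrt (by norm_num)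
  have he2 : e ^ 2 = 2 := Real.sq_sqrt (by norm_num)
  have ha0 : 0 ≤ a := Real.sqrt_nonneg _
  have hb0 : 0 ≤ b := Real.sqrt_nonneg _
  have hd0 : 0 ≤ d := Real.sqrt_nonneg _
  have he0 : 0 ≤ e := Real.sqrt_nonneg _
  unfold c
  rw [← hb', ← hd']
  rcases le_or_gt (s ^ 2) (3/4) with hcase | hcase
  · -- need a + d ≥ b + e*s
    have k1 : (e * s * b) ^ 2 ≤ (a * d) ^ 2 := by
      have h1 : (e * s * b) ^ 2 = e^2 * s^2 * b^2 := by ring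
      have h2 : (a * d) ^ 2 = a^2 * d^2 := by ring
      rw [h1, h2, ha2, hb2, hd2, he2]
      nlinarith [mul_nonneg (sq_nonneg r) (show (0:ℝ) ≤ 3/4 - s^2 by linarith)]
    have k2 : e * s * b ≤ a * d :=
      (abs_le_of_sq_le_sq' k1 (mul_nonneg ha0 hd0)).2
    have h0 : b^2 - a^2 - d^2 + e^2 * s^2 = 0 := by rw [ha2, hb2, hd2, he2]; ring
    have hexp : (a + d) ^ 2 - (b + e * s) ^ 2
        = -(b^2 - a^2 - d^2 + e^2*s^2) + 2*(a*d - e*s*b) := by ring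
    have k3 : (b + e * s) ^ 2 ≤ (a + d) ^ 2 := by linarith
    have k4 : b + e * s ≤ a + d :=
      (abs_le_of_sq_le_sq' k3 (by positivity)).2
    nlinarith
  · -- need a + d ≤ b + e*s
    have k1 : (a * d) ^ 2 ≤ (e * s * b) ^ 2 := by
      have h1 : (e * s * b) ^ 2 = e^2 * s^2 * b^2 := by ring
      have h2 : (a * d) ^ 2 = a^2 * d^2 := by ring
      rw [h1, h2, ha2, hb2, hd2, he2]
      nlinarith [mul_nonneg (sq_nonneg r) (show (0:ℝ) ≤ s^2 - 3/4 by linarith)]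
    have k2 : a * d ≤ e * s * b :=
      (abs_le_of_sq_le_sq' k1 (by positivity)).2
    have h0 : b^2 - a^2 - d^2 + e^2 * s^2 = 0 := by rw [ha2, hb2, hd2, he2]; ring
    have hexp : (b + e * s) ^ 2 - (a + d) ^ 2
        = (b^2 - a^2 - d^2 + e^2*s^2) + 2*(e*s*b - a*d) := by ring
    have k3 : (a + d) ^ 2 ≤ (b + e * s) ^ 2 := by linarith
    have k4 : a + d ≤ b + e * s :=
      (abs_le_of_sq_le_sq' k3 (by positivity)).2
    nlinarith

lemma cos_2pi3 : Real.cos (2*π/3) = -(1/2) := by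
  rw [show (2*π/3 : ℝ) = π - π/3 by ring, Real.cos_pi_sub, Real.cos_pi_div_three]

lemma sin_2pi3 : Real.sin (2*π/3) = Real.sqrt 3 / 2 := by
  rw [show (2*π/3 : ℝ) = π - π/3 by ring, Real.sin_pi_sub, Real.sin_pi_div_three]

lemma E1 : (∫ y in (0:ℝ)..(2*π/3), Real.sin y * (3/4 - Real.sin y ^ 2)) = 0 := by
  have hderiv : ∀ y ∈ uIcc (0:ℝ) (2*π/3),
      HasDerivAt (fun z => Real.cos z / 4 - Real.cos z ^ 3 / 3)
        (Real.sin y * (3/4 - Real.sin y ^ 2)) y := by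
    intro y _
    have h := ((Real.hasDerivAt_cos y).div_const 4).sub
      (((Real.hasDerivAt_cos y).pow 3).div_const 3)
    refine h.congr_deriv ?_; symm
    have hsc := Real.sin_sq_add_cos_sq y
    norm_num
    linear_combination (-(Real.sin y)) * hsc
  rw [integral_eq_sub_of_hasDerivAt hderiv (by apply Continuous.intervalIntegrable; fun_prop)]
  rw [cos_2pi3]
  norm_num

lemma E2 : (∫ y in (0:ℝ)..(2*π/3), (3/4 - Real.sin y ^ 2)) = π/6 - Real.sqrt 3 / 8 := by
  have hderiv : ∀ y ∈ uIcc (0:ℝ) (2*π/3),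
      HasDerivAt (fun z => z / 4 + Real.sin z * Real.cos z / 2)
        (3/4 - Real.sin y ^ 2) y := by
    intro y _
    have h := ((hasDerivAt_id y).div_const 4).add
      (((Real.hasDerivAt_sin y).mul (Real.hasDerivAt_cos y)).div_const 2)
    refine h.congr_deriv ?_; symm
    have hsc := Real.sin_sq_add_cos_sq y
    norm_num
    linear_combination ((-1:ℝ)/2) * hsc
  rw [integral_eq_sub_of_hasDerivAt hderiv (by apply Continuous.intervalIntegrable; fun_prop)]
  rw [cos_2pi3, sin_2pi3, Real.sin_zero]
  ring_nf


lemma aux_pos : 0 < π/6 - Real.sqrt 3 / 8 := by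
  have h3 : Real.sqrt 3 ^ 2 = 3 := Real.sq_sqrt (by norm_num)
  have h2 : Real.sqrt 3 < 2 := by nlinarith [Real.sqrt_nonneg 3]
  linarith [Real.pi_gt_three]

lemma key (r : ℝ) : c r * (π/6 - Real.sqrt 3 / 8) ≤ ∫ y in (0:ℝ)..(2*π/3), g r y := by
  have h23 : (0:ℝ) ≤ 2*π/3 := by positivity
  have hfi : IntervalIntegrable
      (fun y => Real.sqrt 2 * (Real.sin y * (3/4 - Real.sin y ^ 2))
        + c r * (3/4 - Real.sin y ^ 2)) volume 0 (2*π/3) := by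
    apply Continuous.intervalIntegrable; fun_prop
  have hmono := intervalIntegral.integral_mono_on (μ := volume) h23 hfi (intg r 0 (2*π/3))
    (fun y hy => by
      have hy' : y ∈ Icc 0 π := ⟨hy.1, hy.2.trans (by linarith [Real.pi_pos])⟩
      have := pw (r := r) hy'
      unfold g
      linarith [this])
  have hsplit : (∫ y in (0:ℝ)..(2*π/3),
      (Real.sqrt 2 * (Real.sin y * (3/4 - Real.sin y ^ 2)) + c r * (3/4 - Real.sin y ^ 2)))
      = Real.sqrt 2 * (∫ y in (0:ℝ)..(2*π/3), Real.sin y * (3/4 - Real.sin y ^ 2))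
        + c r * ∫ y in (0:ℝ)..(2*π/3), (3/4 - Real.sin y ^ 2) := by
    rw [intervalIntegral.integral_add, intervalIntegral.integral_const_mul,
      intervalIntegral.integral_const_mul]
    · apply Continuous.intervalIntegrable; fun_prop
    · apply Continuous.intervalIntegrable; fun_prop
  rw [hsplit, E1, E2] at hmono
  simpa using hmono

lemma within (r : ℝ) {t : ℝ} (ht : t ∈ Icc 0 π) : 0 ≤ ∫ y in (0:ℝ)..t, g r y := by
  have hc : 0 ≤ c r * (π/6 - Real.sqrt 3 / 8) :=
    mul_nonneg (c_nonneg r) aux_pos.le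
  rcases le_or_gt t (π/3) with h1 | h1
  · exact intervalIntegral.integral_nonneg ht.1
      (fun u hu => g_nonneg₁ ⟨hu.1, hu.2.trans h1⟩)
  rcases le_or_gt t (2*π/3) with h2 | h2
  · have hsplit : (∫ y in (0:ℝ)..(2*π/3), g r y)
        = (∫ y in (0:ℝ)..t, g r y) + ∫ y in t..(2*π/3), g r y :=
      (intervalIntegral.integral_add_adjacent_intervals (intg r 0 t) (intg r t (2*π/3))).symm
    have hnp : (∫ y in t..(2*π/3), g r y) ≤ 0 := by
      have := intervalIntegral.integral_mono_on (μ := volume) h2 (intg r t (2*π/3))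
        ((continuous_const (y := (0:ℝ))).intervalIntegrable t (2*π/3))
        (fun u hu => g_nonpos₂ ⟨h1.le.trans hu.1, hu.2⟩)
      simpa using this
    linarith [key r]
  · have hsplit : (∫ y in (0:ℝ)..t, g r y)
        = (∫ y in (0:ℝ)..(2*π/3), g r y) + ∫ y in (2*π/3)..t, g r y :=
      (intervalIntegral.integral_add_adjacent_intervals (intg r 0 (2*π/3)) (intg r (2*π/3) t)).symm
    have hnn : 0 ≤ ∫ y in (2*π/3)..t, g r y :=
      intervalIntegral.integral_nonneg h2.le (fun u hu => g_nonneg₃ ⟨hu.1, hu.2.trans ht.2⟩)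
    linarith [key r]

lemma withinpos {r : ℝ} (hr : 0 < r) {t : ℝ} (ht : t ∈ Ioc 0 π) :
    0 < ∫ y in (0:ℝ)..t, g r y := by
  have hK : 0 < ∫ y in (0:ℝ)..(2*π/3), g r y :=
    lt_of_lt_of_le (mul_pos (c_pos hr) aux_pos) (key r)
  rcases le_or_gt t (π/3) with h1 | h1
  · exact intervalIntegral_pos_of_pos_on (intg r 0 t)
      (fun x hx => g_pos₁ ⟨hx.1, lt_of_lt_of_le hx.2 h1⟩) ht.1
  rcases le_or_gt t (2*π/3) with h2 | h2
  · have hsplit : (∫ y in (0:ℝ)..(2*π/3), g r y)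
        = (∫ y in (0:ℝ)..t, g r y) + ∫ y in t..(2*π/3), g r y :=
      (intervalIntegral.integral_add_adjacent_intervals (intg r 0 t) (intg r t (2*π/3))).symm
    have hnp : (∫ y in t..(2*π/3), g r y) ≤ 0 := by
      have := intervalIntegral.integral_mono_on (μ := volume) h2 (intg r t (2*π/3))
        ((continuous_const (y := (0:ℝ))).intervalIntegrable t (2*π/3))
        (fun u hu => g_nonpos₂ ⟨h1.le.trans hu.1, hu.2⟩)
      simpa using this
    linarith
  · have hsplit : (∫ y in (0:ℝ)..t, g r y)
        = (∫ y in (0:ℝ)..(2*π/3), g r y) + ∫ y in (2*π/3)..t, g r y :=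
      (intervalIntegral.integral_add_adjacent_intervals (intg r 0 (2*π/3)) (intg r (2*π/3) t)).symm
    have hnn : 0 ≤ ∫ y in (2*π/3)..t, g r y :=
      intervalIntegral.integral_nonneg h2.le (fun u hu => g_nonneg₃ ⟨hu.1, hu.2.trans ht.2⟩)
    linarith

lemma Ipos (r : ℝ) : 0 < ∫ y in (0:ℝ)..π, g r y := by
  have h2 : (2*π/3 : ℝ) < π := by linarith [Real.pi_pos]
  have hsplit : (∫ y in (0:ℝ)..π, g r y)
      = (∫ y in (0:ℝ)..(2*π/3), g r y) + ∫ y in (2*π/3)..π, g r y :=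
    (intervalIntegral.integral_add_adjacent_intervals (intg r 0 (2*π/3)) (intg r (2*π/3) π)).symm
  have hpos : 0 < ∫ y in (2*π/3)..π, g r y :=
    intervalIntegral_pos_of_pos_on (intg r (2*π/3) π) (fun x hx => g_pos₃ hx) h2
  have hK : 0 ≤ ∫ y in (0:ℝ)..(2*π/3), g r y :=
    le_trans (mul_nonneg (c_nonneg r) aux_pos.le) (key r)
  linarith

lemma Fsplit (r β : ℝ) (hβ : 0 ≤ β) :
    ∃ n : ℤ, 0 ≤ n ∧ ∃ t : ℝ, t ∈ Ico 0 π ∧ β = n * π + t ∧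
      (∫ y in (0:ℝ)..β, g r y) = n * (∫ y in (0:ℝ)..π, g r y) + ∫ y in (0:ℝ)..t, g r y := by
  have hπ : (0:ℝ) < π := Real.pi_pos
  set n : ℤ := ⌊β / π⌋ with hn
  have hn0 : 0 ≤ n := Int.floor_nonneg.mpr (div_nonneg hβ hπ.le)
  have h1 : (n:ℝ) * π ≤ β := by
    have := Int.floor_le (β / π)
    calc (n:ℝ) * π ≤ (β/π) * π := by nlinarith
    _ = β := by field_simp
  have h2 : β < ((n:ℝ) + 1) * π := by
    have := Int.lt_floor_add_one (β / π)
    calc β = (β/π) * π := by field_simp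
    _ < ((n:ℝ) + 1) * π := by nlinarith
  refine ⟨n, hn0, β - n * π, ⟨by linarith, by linarith⟩, by ring, ?_⟩
  have hadj : (∫ y in (0:ℝ)..β, g r y)
      = (∫ y in (0:ℝ)..((n:ℝ)*π), g r y) + ∫ y in ((n:ℝ)*π)..β, g r y :=
    (intervalIntegral.integral_add_adjacent_intervals (intg r 0 _) (intg r _ β)).symm
  have hmul : (∫ y in (0:ℝ)..((n:ℝ)*π), g r y) = n * ∫ y in (0:ℝ)..π, g r y := by
    have := (per r).intervalIntegral_add_zsmul_eq n 0 (intg r)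
    simpa [zsmul_eq_mul] using this
  have hper' : ∀ x : ℝ, g r (x + (n:ℝ) * π) = g r x := by
    intro x
    have := ((per r).zsmul n) x
    simpa [zsmul_eq_mul] using this
  have hshift : (∫ y in ((n:ℝ)*π)..β, g r y) = ∫ y in (0:ℝ)..(β - n*π), g r y := by
    have hc := intervalIntegral.integral_comp_add_right (a := (0:ℝ)) (b := β - n*π)
      (g r) ((n:ℝ)*π)
    simp only [hper'] at hc
    rw [hc]
    norm_num
  rw [hadj, hmul, hshift]

end SkyrmeAux

open SkyrmeAux

theorem skyrme_stmt1 :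
    ∃ r₀ > (0:ℝ), ∀ r : ℝ, 0 ≤ r → r ≤ r₀ →
      (∀ β : ℝ, 0 ≤ β →
        0 ≤ ∫ y in (0:ℝ)..β, Real.sqrt (r ^ 2 + 2 * Real.sin y ^ 2) * (3/4 - Real.sin y ^ 2)) ∧
      (0 < r → ∀ β : ℝ, 0 ≤ β →
        ((∫ y in (0:ℝ)..β, Real.sqrt (r ^ 2 + 2 * Real.sin y ^ 2) * (3/4 - Real.sin y ^ 2)) = 0
          ↔ β = 0)) := by
  refine ⟨1, one_pos, fun r hr _ => ⟨fun β hβ => ?_, fun hr' β hβ => ?_⟩⟩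
  · show 0 ≤ ∫ y in (0:ℝ)..β, g r y
    obtain ⟨n, hn0, t, htm, -, heq⟩ := Fsplit r β hβ
    rw [heq]
    have h1 : 0 ≤ (n:ℝ) * ∫ y in (0:ℝ)..π, g r y :=
      mul_nonneg (by exact_mod_cast hn0) (Ipos r).le
    have h2 : 0 ≤ ∫ y in (0:ℝ)..t, g r y := within r ⟨htm.1, htm.2.le⟩
    linarith
  · show (∫ y in (0:ℝ)..β, g r y) = 0 ↔ β = 0
    constructor
    · intro h0
      by_contra hβ0
      have hβpos : 0 < β := lt_of_le_of_ne hβ (Ne.symm hβ0)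
      obtain ⟨n, hn0, t, htm, hbeq, heq⟩ := Fsplit r β hβ
      have h2 : 0 ≤ ∫ y in (0:ℝ)..t, g r y := within r ⟨htm.1, htm.2.le⟩
      rcases eq_or_lt_of_le hn0 with hn | hn
      · have ht0 : t = β := by rw [hbeq, ← hn]; norm_num
        have := withinpos hr' (t := t) ⟨by rw [ht0]; exact hβpos, htm.2.le⟩
        rw [heq, ← hn] at h0
        push_cast at h0
        simp at h0
        linarith
      · have h1 : (1:ℝ) ≤ (n:ℝ) := by exact_mod_cast hn
        have hI := Ipos r
        rw [heq] at h0
        nlinarith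
    · rintro rfl
      simp
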